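/- Let f : ℕ → ℤ, A, B, C ∈ ℚ, n₀ ∈ ℕ, p ≥ 1, with f(n₀ + mp) = A(n₀+mp)² + B(n₀+mp) + C for all m ≥ 0. If additionally 2A ∈ ℤ (integral slope case), then Bp + Ap² ∈ ℚ satisfies: 2(Bp + Ap² + 2An₀p) ∈ ℤ; in particular if p = 1 and 2A ∈ ℤ then 2B ∈ ℤ. -/
import Mathlib


theorem stmt_10 (f : ℕ → ℤ) (A B C : ℚ) (n₀ p : ℕ) (hp : 1 ≤ p)
    (hf : ∀ m : ℕ, ((f (n₀ + m * p) : ℚ))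
      = A * ((n₀ : ℚ) + (m : ℚ) * (p : ℚ)) ^ 2 + B * ((n₀ : ℚ) + (m : ℚ) * (p : ℚ)) + C)
    (hA : ∃ k : ℤ, 2 * A = (k : ℚ)) :
    (∃ k : ℤ, 2 * (B * (p : ℚ) + A * (p : ℚ) ^ 2 + 2 * A * (n₀ : ℚ) * (p : ℚ)) = (k : ℚ)) ∧
    (p = 1 → ∃ k : ℤ, 2 * B = (k : ℚ)) := by
  obtain ⟨k, hk⟩ := hA
  have h0 := hf 0
  have h1 := hf 1
  push_cast at h0 h1
  have hd : B * (p : ℚ) + A * (p : ℚ) ^ 2 + 2 * A * (n₀ : ℚ) * (p : ℚ)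
      = ((f (n₀ + 1 * p) - f (n₀ + 0 * p) : ℤ) : ℚ) := by
    push_cast
    rw [h0, h1]; ring
  constructor
  · exact ⟨2 * (f (n₀ + 1 * p) - f (n₀ + 0 * p)), by rw [hd]; push_cast; ring⟩
  · intro hp1
    subst hp1
    refine ⟨2 * (f (n₀ + 1 * 1) - f (n₀ + 0 * 1)) - k * (2 * n₀ + 1), ?_⟩
    push_cast at hd ⊢
    linear_combination 2 * hd - (2 * (n₀ : ℚ) + 1) * hk
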